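/- For every n ≥ 4, the fan graph T_n = K_1 + P_{n−1} (one vertex joined to all vertices of a path on n−1 vertices) is an outerplanar graph with n vertices and 2n − 3 edges containing no subgraph isomorphic to the double star S_{3,3}. -/

import Mathlib

open SimpleGraph Finset

/-- `G` contains a copy of the double star `S_{p,q}`: adjacent centers `x, y`,
with `p` leaves attached to `x` and `q` leaves attached to `y`, all distinct. -/
def ContainsDoubleStar {V : Type*} (G : SimpleGraph V) (p q : ℕ) : Prop :=
  ∃ (x y : V) (X Y : Finset V), G.Adj x y ∧ X.card = p ∧ Y.card = q ∧
    Disjoint X Y ∧ y ∉ X ∧ x ∉ Y ∧ (∀ v ∈ X, G.Adj x v) ∧ (∀ v ∈ Y, G.Adj y v)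

/-- A graph is outerplanar iff it admits a one-page book embedding: a linear
ordering of the vertices such that no two edges cross. -/
def IsOuterplanar {V : Type*} (G : SimpleGraph V) : Prop :=
  ∃ σ : V → Fin (Nat.card V), Function.Bijective σ ∧
    ∀ a b c d : V, G.Adj a b → G.Adj c d → ¬ (σ a < σ c ∧ σ c < σ b ∧ σ b < σ d)

/-- The fan `T_n = K_1 + P_{n-1}`: vertex `0` is the hub joined to every other
vertex, and the vertices `1, …, n-1` form a path in order. -/
def fan (n : ℕ) : SimpleGraph (Fin n) :=
  SimpleGraph.fromRel (fun i j => i.val = 0 ∨ (0 < i.val ∧ j.val = i.val + 1))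

lemma fan_adj {n : ℕ} {a b : Fin n} :
    (fan n).Adj a b ↔ a ≠ b ∧
      ((a.val = 0 ∨ (0 < a.val ∧ b.val = a.val + 1)) ∨
       (b.val = 0 ∨ (0 < b.val ∧ a.val = b.val + 1))) := Iff.rfl

instance (n : ℕ) : DecidableRel (fan n).Adj := fun _ _ =>
  decidable_of_iff _ fan_adj.symm

lemma fan_deg_bound {n : ℕ} (hn : 4 ≤ n) (x : Fin n) (hx : x.val ≠ 0)
    (S : Finset (Fin n)) (hS : ∀ v ∈ S, (fan n).Adj x v) : S.card ≤ 3 := by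
  set z : Fin n := ⟨0, by omega⟩ with hz
  set c : Fin n := if h : x.val + 1 < n then ⟨x.val + 1, h⟩ else z with hc
  set d : Fin n := ⟨x.val - 1, by omega⟩ with hd
  have hsub : S ⊆ {z, c, d} := by
    intro w hw
    have := (fan_adj.mp (hS w hw)).2
    simp only [mem_insert, mem_singleton]
    rcases this with (h0 | ⟨_, hsucc⟩) | (h0 | ⟨_, hsucc⟩)
    · omega
    · right; left
      have hlt : x.val + 1 < n := by omega
      rw [hc, dif_pos hlt]
      exact Fin.val_injective (by simpa using hsucc)
    · left; exact Fin.val_injective h0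
    · right; right; exact Fin.val_injective (by simp [hd]; omega)
  calc S.card ≤ ({z, c, d} : Finset (Fin n)).card := Finset.card_le_card hsub
    _ ≤ 2 + ({d} : Finset (Fin n)).card := by
        refine (Finset.card_insert_le _ _).trans ?_
        have := Finset.card_insert_le c ({d} : Finset (Fin n))
        omega
    _ ≤ 3 := by simp

lemma card_filter_val (n : ℕ) (Q : ℕ → Prop) [DecidablePred Q] :
    ((univ : Finset (Fin n)).filter (fun i => Q i.val)).card
      = ((Finset.range n).filter Q).card := by
  apply Finset.card_nbij (fun i => i.val)
  · intro a ha
    simp only [mem_filter, mem_range] at *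
    simpa [a.isLt] using ha
  · intro a _ b _ h
    exact Fin.val_injective h
  · intro k hk
    simp only [Finset.coe_filter, Set.mem_setOf_eq, mem_range] at hk
    exact ⟨⟨k, hk.1⟩, by simp [hk.2], rfl⟩

lemma fan_edge_count (n : ℕ) (hn : 4 ≤ n) :
    (fan n).edgeFinset.card = 2 * n - 3 := by
  haveI : NeZero n := ⟨by omega⟩
  have h1n : (1 : Fin n).val = 1 := by
    simp [Fin.val_one, Nat.mod_eq_of_lt (by omega : 1 < n)]
  have hadd : ∀ i : Fin n, i.val + 1 < n → (i + 1).val = i.val + 1 := by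
    intro i hi
    simp [Fin.val_add, h1n, Nat.mod_eq_of_lt hi]
  set A : Finset (Sym2 (Fin n)) :=
    (univ.filter (fun i : Fin n => 0 < i.val)).image (fun i => s((0 : Fin n), i)) with hA
  set B : Finset (Sym2 (Fin n)) :=
    (univ.filter (fun i : Fin n => 0 < i.val ∧ i.val + 1 < n)).image (fun i => s(i, i + 1)) with hB
  have h0 : (0 : Fin n).val = 0 := rfl
  have hedge : (fan n).edgeFinset = A ∪ B := by
    ext e
    induction e with
    | h a b =>
      simp only [mem_edgeFinset, mem_edgeSet, hA, hB, mem_union, mem_image, mem_filter, mem_univ,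
        true_and, fan_adj]
      constructor
      · rintro ⟨hab, h⟩
        have hne : a.val ≠ b.val := fun h => hab (Fin.val_injective h)
        rcases h with (h0a | ⟨hpos, hsucc⟩) | (h0b | ⟨hpos, hsucc⟩)
        · left
          refine ⟨b, by omega, ?_⟩
          rw [show a = 0 from Fin.val_injective h0a]
        · right
          refine ⟨a, ⟨hpos, by omega⟩, ?_⟩
          have : a + 1 = b := Fin.val_injective (by rw [hadd a (by omega)]; omega)
          rw [this]
        · left
          refine ⟨a, by omega, ?_⟩
          rw [show b = 0 from Fin.val_injective h0b, Sym2.eq_swap]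
        · right
          refine ⟨b, ⟨hpos, by omega⟩, ?_⟩
          rw [Sym2.eq_swap]
          have : b + 1 = a := Fin.val_injective (by rw [hadd b (by omega)]; omega)
          rw [this]
      · rintro (⟨i, hi, he⟩ | ⟨i, ⟨hi, hi2⟩, he⟩)
        · rcases Sym2.eq_iff.mp he with ⟨h1, h2⟩ | ⟨h1, h2⟩
          · subst h1; subst h2
            exact ⟨fun h => by rw [← h] at hi; simp at hi, Or.inl (Or.inl rfl)⟩
          · subst h1; subst h2
            exact ⟨fun h => by rw [h] at hi; simp at hi, Or.inr (Or.inl rfl)⟩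
        · have hv : (i + 1).val = i.val + 1 := hadd i hi2
          rcases Sym2.eq_iff.mp he with ⟨h1, h2⟩ | ⟨h1, h2⟩
          · subst h1; subst h2
            exact ⟨fun h => by have hc := congrArg Fin.val h; rw [hv] at hc; omega,
              Or.inl (Or.inr ⟨hi, hv⟩)⟩
          · subst h1; subst h2
            exact ⟨fun h => by have hc := congrArg Fin.val h; rw [hv] at hc; omega,
              Or.inr (Or.inr ⟨hi, hv⟩)⟩
  have hAcard : A.card = n - 1 := by
    rw [hA, Finset.card_image_of_injOn]
    · rw [card_filter_val n (fun k => 0 < k)]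
      have : (Finset.range n).filter (fun k => 0 < k) = Finset.Ioo 0 n := by
        ext k; simp [Finset.mem_Ioo]; omega
      rw [this, Nat.card_Ioo]; omega
    · intro i hi j hj h
      simp only [mem_coe, mem_filter] at hi hj
      rcases Sym2.eq_iff.mp h with ⟨_, h2⟩ | ⟨h1, h2⟩
      · exact h2
      · exfalso; have := hi.2; rw [h2] at this; simp at this
  have hBcard : B.card = n - 2 := by
    rw [hB, Finset.card_image_of_injOn]
    · rw [card_filter_val n (fun k => 0 < k ∧ k + 1 < n)]
      have : (Finset.range n).filter (fun k => 0 < k ∧ k + 1 < n) = Finset.Ioo 0 (n - 1) := by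
        ext k; simp [Finset.mem_Ioo]; omega
      rw [this, Nat.card_Ioo]; omega
    · intro i hi j hj h
      simp only [mem_coe, mem_filter] at hi hj
      have hvi := hadd i hi.2.2
      have hvj := hadd j hj.2.2
      rcases Sym2.eq_iff.mp h with ⟨h1, _⟩ | ⟨h1, h2⟩
      · exact h1
      · exfalso
        have e1 : i.val = (j + 1).val := congrArg Fin.val h1
        have e2 : (i + 1).val = j.val := congrArg Fin.val h2
        rw [hvj] at e1; rw [hvi] at e2; omega
  have hdisj : Disjoint A B := by
    rw [Finset.disjoint_left]
    rintro e heA heB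
    simp only [hA, hB, mem_image, mem_filter, mem_univ, true_and] at heA heB
    obtain ⟨i, hi, hei⟩ := heA
    obtain ⟨j, ⟨hj1, hj2⟩, hej⟩ := heB
    have hvj := hadd j hj2
    rw [← hej] at hei
    rcases Sym2.eq_iff.mp hei with ⟨h1, _⟩ | ⟨h1, _⟩
    · have := congrArg Fin.val h1; simp only [h0] at this; omega
    · have := congrArg Fin.val h1; rw [hvj] at this; simp only [h0] at this; omega
  rw [hedge, Finset.card_union_of_disjoint hdisj, hAcard, hBcard]
  omega

theorem stmt14 (n : ℕ) (hn : 4 ≤ n) :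
    IsOuterplanar (fan n) ∧ Nat.card (Fin n) = n ∧
      Nat.card (fan n).edgeSet = 2 * n - 3 ∧ ¬ ContainsDoubleStar (fan n) 3 3 := by
  have hcard : Nat.card (Fin n) = n := by simp
  refine ⟨?_, hcard, ?_, ?_⟩
  · -- outerplanar
    refine ⟨fun v => Fin.cast hcard.symm v, (finCongr hcard.symm).bijective, ?_⟩
    intro a b c d hab hcd ⟨h1, h2, h3⟩
    obtain ⟨hne1, hr1⟩ := fan_adj.mp hab
    obtain ⟨hne2, hr2⟩ := fan_adj.mp hcd
    simp only [Fin.lt_def, Fin.coe_cast] at h1 h2 h3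
    have hne1' : a.val ≠ b.val := fun h => hne1 (Fin.val_injective h)
    have hne2' : c.val ≠ d.val := fun h => hne2 (Fin.val_injective h)
    omega
  · -- edge count
    have : Nat.card (fan n).edgeSet = (fan n).edgeFinset.card := by
      rw [Nat.card_eq_fintype_card, ← Set.toFinset_card]
      congr 1
    rw [this, fan_edge_count n hn]
  · -- no double star
    rintro ⟨x, y, X, Y, hxy, hX, hY, hdisj, hyX, hxY, hXadj, hYadj⟩
    have hxne : x ≠ y := (fan_adj.mp hxy).1
    have hx0 : x.val = 0 := by
      by_contra hx0
      have h4 : (insert y X).card = 4 := by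
        rw [Finset.card_insert_of_notMem hyX, hX]
      have := fan_deg_bound hn x hx0 (insert y X) ?_
      · omega
      · intro v hv
        rcases Finset.mem_insert.mp hv with rfl | hv
        · exact hxy
        · exact hXadj v hv
    have hy0 : y.val = 0 := by
      by_contra hy0
      have h4 : (insert x Y).card = 4 := by
        rw [Finset.card_insert_of_notMem hxY, hY]
      have := fan_deg_bound hn y hy0 (insert x Y) ?_
      · omega
      · intro v hv
        rcases Finset.mem_insert.mp hv with rfl | hv
        · exact hxy.symm
        · exact hYadj v hv
    exact hxne (Fin.val_injective (hx0.trans hy0.symm))
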